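/- There exist noncongruent convex bodies K and L in ℝⁿ (containing the origin in their interiors) such that for all integers i, k with 1 ≤ i ≤ k ≤ n−1 and every k-dimensional linear subspace H of ℝⁿ, the intrinsic volumes satisfy V_i(K ∩ H) = V_i(L ∩ H). -/

import Mathlib

open Set MeasureTheory Pointwise

/-- The volume of the `j`-dimensional Euclidean unit ball. -/
noncomputable def kball (j : ℕ) : ℝ :=
  (volume (Metric.closedBall (0 : EuclideanSpace ℝ (Fin j)) 1)).toReal

/-- `Vfun` is the family of intrinsic volumes: it satisfies Steiner's formula
`vol_n(A + ε B₂ⁿ) = ∑_{i=0}^n κ_{n-i} V_i(A) ε^{n-i}` for every nonempty compact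
convex set `A` and every `ε ≥ 0`. -/
def IsIntrinsicVolumes {n : ℕ} (Vfun : ℕ → Set (EuclideanSpace ℝ (Fin n)) → ℝ) : Prop :=
  ∀ A : Set (EuclideanSpace ℝ (Fin n)), IsCompact A → Convex ℝ A → A.Nonempty →
    ∀ ε : ℝ, 0 ≤ ε →
      (volume (A + ε • Metric.closedBall (0 : EuclideanSpace ℝ (Fin n)) 1)).toReal =
        ∑ i ∈ Finset.range (n + 1), kball (n - i) * Vfun i A * ε ^ (n - i)


theorem set_neg_add' {G : Type*} [AddCommGroup G] (s t : Set G) : -(s + t) = (-s) + (-t) := by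
  ext x
  simp only [Set.mem_neg, Set.mem_add]
  constructor
  · rintro ⟨a, ha, b, hb, hab⟩
    refine ⟨-a, by simpa using ha, -b, by simpa using hb, ?_⟩
    have : x = -(a + b) := by rw [hab]; abel
    rw [this]; abel
  · rintro ⟨a, ha, b, hb, hab⟩
    refine ⟨-a, ha, -b, hb, ?_⟩
    rw [← hab]; abel

theorem inter_add_of_union_convex {E : Type*} [NormedAddCommGroup E] [NormedSpace ℝ E]
    {X Y C : Set E} (hXc : IsClosed X) (hYc : IsClosed Y)
    (hXY : Convex ℝ (X ∪ Y)) (hC : Convex ℝ C) :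
    (X + C) ∩ (Y + C) = (X ∩ Y) + C := by
  apply Set.Subset.antisymm
  · rintro z ⟨hz1, hz2⟩
    rw [Set.mem_add] at hz1 hz2
    obtain ⟨x, hx, c1, hc1, hxz⟩ := hz1
    obtain ⟨y, hy, c2, hc2, hyz⟩ := hz2
    set γ : ℝ → E := fun t => x + t • (y - x) with hγdef
    have hγ : Continuous γ := by
      exact continuous_const.add (continuous_id.smul continuous_const)
    set S : Set ℝ := Set.Icc (0:ℝ) 1 ∩ γ ⁻¹' X with hSdef
    have hScomp : IsCompact S := isCompact_Icc.inter_right (hXc.preimage hγ)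
    have hS0 : (0:ℝ) ∈ S := by
      constructor
      · exact ⟨le_refl 0, zero_le_one⟩
      · show γ 0 ∈ X
        simp only [hγdef, zero_smul, add_zero]
        exact hx
    have hSne : S.Nonempty := ⟨0, hS0⟩
    set t0 : ℝ := sSup S with ht0def
    have ht0S : t0 ∈ S := hScomp.sSup_mem hSne
    have ht00 : 0 ≤ t0 := ht0S.1.1
    have ht01 : t0 ≤ 1 := ht0S.1.2
    have hwX : γ t0 ∈ X := ht0S.2
    have hseg : ∀ t : ℝ, 0 ≤ t → t ≤ 1 → γ t ∈ X ∪ Y := by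
      intro t ht0 ht1
      have := hXY (Set.mem_union_left _ hx) (Set.mem_union_right _ hy)
        (sub_nonneg.2 ht1) ht0 (by ring)
      convert this using 1
      simp only [hγdef]
      module
    have hwY : γ t0 ∈ Y := by
      rcases eq_or_lt_of_le ht01 with h1 | h1
      · have : γ t0 = y := by
          simp only [hγdef, h1, one_smul]
          abel
        rw [this]; exact hy
      · have htend : Filter.Tendsto γ (nhdsWithin t0 (Set.Ioi t0)) (nhds (γ t0)) :=
          (hγ.tendsto t0).mono_left nhdsWithin_le_nhds
        apply hYc.mem_of_tendsto htend
        filter_upwards [Ioc_mem_nhdsGT_of_mem ⟨le_refl t0, h1⟩] with t ht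
        have htXY : γ t ∈ X ∪ Y := hseg t (le_trans ht00 ht.1.le) ht.2
        rcases htXY with hX' | hY'
        · exfalso
          have : t ≤ t0 := le_csSup hScomp.bddAbove ⟨⟨le_trans ht00 ht.1.le, ht.2⟩, hX'⟩
          exact absurd this (not_le.2 ht.1)
        · exact hY'
    refine ⟨γ t0, ⟨hwX, hwY⟩, z - γ t0, ?_, by module⟩
    have hc1e : c1 = z - x := by rw [← hxz]; abel
    have hc2e : c2 = z - y := by rw [← hyz]; abel
    have key : z - γ t0 = (1 - t0) • c1 + t0 • c2 := by
      rw [hc1e, hc2e]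
      simp only [hγdef]
      module
    rw [key]
    exact hC hc1 hc2 (sub_nonneg.2 ht01) ht00 (by ring)
  · rintro z ⟨w, hw, c, hc, rfl⟩
    exact ⟨⟨w, hw.1, c, hc, rfl⟩, ⟨w, hw.2, c, hc, rfl⟩⟩

theorem step_measure {N : ℕ} (X Y C : Set (EuclideanSpace ℝ (Fin N)))
    (hXcomp : IsCompact X) (hYcomp : IsCompact Y) (hCcomp : IsCompact C)
    (hXY : Convex ℝ (X ∪ Y)) (hC : Convex ℝ C) :
    volume ((X ∪ Y) + C) + volume ((X ∩ Y) + C) = volume (X + C) + volume (Y + C) := by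
  rw [Set.union_add,
    ← inter_add_of_union_convex hXcomp.isClosed hYcomp.isClosed hXY hC]
  exact measure_union_add_inter _ ((hYcomp.add hCcomp).isClosed.measurableSet)

section
variable {N : ℕ}

theorem hybrid_volume (i0 i1 : Fin N) (M C : Set (EuclideanSpace ℝ (Fin N)))
    (hM : Convex ℝ M) (hMc : IsCompact M)
    (hs0 : ∀ x ∈ M, x i0 = 0 → -x ∈ M) (hs1 : ∀ x ∈ M, x i1 = 0 → -x ∈ M)
    (hC : Convex ℝ C) (hCc : IsCompact C) (hCs : -C = C)
    (hN : Convex ℝ ((M ∩ {x | 0 ≤ x i0 ∧ 0 ≤ x i1}) ∪ ((-M) ∩ {x | x i0 ≤ 0 ∧ 0 ≤ x i1})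
      ∪ (M ∩ {x | x i0 ≤ 0 ∧ x i1 ≤ 0}) ∪ ((-M) ∩ {x | 0 ≤ x i0 ∧ x i1 ≤ 0}))) :
    volume (M + C) =
      volume (((M ∩ {x | 0 ≤ x i0 ∧ 0 ≤ x i1}) ∪ ((-M) ∩ {x | x i0 ≤ 0 ∧ 0 ≤ x i1})
      ∪ (M ∩ {x | x i0 ≤ 0 ∧ x i1 ≤ 0}) ∪ ((-M) ∩ {x | 0 ≤ x i0 ∧ x i1 ≤ 0})) + C) := by
  have hlin : ∀ i : Fin N, IsLinearMap ℝ (fun x : EuclideanSpace ℝ (Fin N) => x i) :=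
    fun i => ⟨fun x y => by simp, fun c x => by simp⟩
  have hcont : ∀ i : Fin N, Continuous (fun x : EuclideanSpace ℝ (Fin N) => x i) := by
    intro i
    exact (EuclideanSpace.proj (𝕜 := ℝ) i).continuous
  have hclge : ∀ i : Fin N, IsClosed {x : EuclideanSpace ℝ (Fin N) | 0 ≤ x i} :=
    fun i => isClosed_le continuous_const (hcont i)
  have hclle : ∀ i : Fin N, IsClosed {x : EuclideanSpace ℝ (Fin N) | x i ≤ 0} :=
    fun i => isClosed_le (hcont i) continuous_const
  have hcvge : ∀ i : Fin N, Convex ℝ {x : EuclideanSpace ℝ (Fin N) | 0 ≤ x i} :=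
    fun i => convex_halfSpace_ge (hlin i) 0
  have hcvle : ∀ i : Fin N, Convex ℝ {x : EuclideanSpace ℝ (Fin N) | x i ≤ 0} :=
    fun i => convex_halfSpace_le (hlin i) 0
  set Q1 : Set (EuclideanSpace ℝ (Fin N)) := {x | 0 ≤ x i0 ∧ 0 ≤ x i1} with hQ1
  set Q2 : Set (EuclideanSpace ℝ (Fin N)) := {x | x i0 ≤ 0 ∧ 0 ≤ x i1} with hQ2
  set Q3 : Set (EuclideanSpace ℝ (Fin N)) := {x | x i0 ≤ 0 ∧ x i1 ≤ 0} with hQ3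
  set Q4 : Set (EuclideanSpace ℝ (Fin N)) := {x | 0 ≤ x i0 ∧ x i1 ≤ 0} with hQ4
  have hQ1c : IsClosed Q1 := (hclge i0).inter (hclge i1)
  have hQ2c : IsClosed Q2 := (hclle i0).inter (hclge i1)
  have hQ3c : IsClosed Q3 := (hclle i0).inter (hclle i1)
  have hQ4c : IsClosed Q4 := (hclge i0).inter (hclle i1)
  set Nst : Set (EuclideanSpace ℝ (Fin N)) :=
    (M ∩ Q1) ∪ ((-M) ∩ Q2) ∪ (M ∩ Q3) ∪ ((-M) ∩ Q4) with hNst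
  have hMneg : IsCompact (-M : Set (EuclideanSpace ℝ (Fin N))) := hMc.neg
  have hP1c : IsCompact (M ∩ Q1) := hMc.inter_right hQ1c
  have hP2c : IsCompact (M ∩ Q2) := hMc.inter_right hQ2c
  have hP3c : IsCompact (M ∩ Q3) := hMc.inter_right hQ3c
  have hP4c : IsCompact (M ∩ Q4) := hMc.inter_right hQ4c
  have hQ2sc : IsCompact ((-M) ∩ Q2) := hMneg.inter_right hQ2c
  have hQ4sc : IsCompact ((-M) ∩ Q4) := hMneg.inter_right hQ4c
  have hNc : IsCompact Nst := ((hP1c.union hQ2sc).union hP3c).union hQ4sc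
  set Gp : Set (EuclideanSpace ℝ (Fin N)) := {x | 0 ≤ x i1} with hGp
  set Gm : Set (EuclideanSpace ℝ (Fin N)) := {x | x i1 ≤ 0} with hGm
  set Fp : Set (EuclideanSpace ℝ (Fin N)) := {x | 0 ≤ x i0} with hFp
  set Fm : Set (EuclideanSpace ℝ (Fin N)) := {x | x i0 ≤ 0} with hFm
  have key : ∀ X Y : Set (EuclideanSpace ℝ (Fin N)), IsCompact X → IsCompact Y →
      Convex ℝ (X ∪ Y) →
      volume ((X ∪ Y) + C) + volume ((X ∩ Y) + C) = volume (X + C) + volume (Y + C) :=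
    fun X Y hX hY hXY => step_measure X Y C hX hY hCc hXY hC
  have memNst : ∀ x : EuclideanSpace ℝ (Fin N),
      x ∈ Nst ↔ (x ∈ M ∧ x ∈ Q1) ∨ ((-x) ∈ M ∧ x ∈ Q2) ∨ (x ∈ M ∧ x ∈ Q3) ∨ ((-x) ∈ M ∧ x ∈ Q4) := by
    intro x
    simp only [hNst, Set.mem_union, Set.mem_inter_iff, Set.mem_neg]
    tauto
  -- M-side identities
  have idM1 : (M ∩ Gp) ∪ (M ∩ Gm) = M := by
    ext x
    simp only [Set.mem_union, Set.mem_inter_iff, hGp, hGm, Set.mem_setOf_eq]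
    constructor
    · rintro (⟨h, _⟩ | ⟨h, _⟩) <;> exact h
    · intro h
      rcases le_total 0 (x i1) with h1 | h1
      · exact Or.inl ⟨h, h1⟩
      · exact Or.inr ⟨h, h1⟩
  have idM2 : (M ∩ Gp) ∩ (M ∩ Gm) = M ∩ {x | x i1 = 0} := by
    ext x
    simp only [Set.mem_inter_iff, hGp, hGm, Set.mem_setOf_eq]
    constructor
    · rintro ⟨⟨h, h1⟩, ⟨_, h2⟩⟩
      exact ⟨h, le_antisymm h2 h1⟩
    · rintro ⟨h, h1⟩
      exact ⟨⟨h, h1.ge⟩, ⟨h, h1.le⟩⟩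
  have idM3 : ((M ∩ Gp) ∩ Fp) ∪ ((M ∩ Gp) ∩ Fm) = M ∩ Gp := by
    ext x
    simp only [Set.mem_union, Set.mem_inter_iff, hFp, hFm, Set.mem_setOf_eq]
    constructor
    · rintro (⟨h, _⟩ | ⟨h, _⟩) <;> exact h
    · intro h
      rcases le_total 0 (x i0) with h1 | h1
      · exact Or.inl ⟨h, h1⟩
      · exact Or.inr ⟨h, h1⟩
  have idM3' : ((M ∩ Gm) ∩ Fp) ∪ ((M ∩ Gm) ∩ Fm) = M ∩ Gm := by
    ext x
    simp only [Set.mem_union, Set.mem_inter_iff, hFp, hFm, Set.mem_setOf_eq]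
    constructor
    · rintro (⟨h, _⟩ | ⟨h, _⟩) <;> exact h
    · intro h
      rcases le_total 0 (x i0) with h1 | h1
      · exact Or.inl ⟨h, h1⟩
      · exact Or.inr ⟨h, h1⟩
  have idM4 : (M ∩ Gp) ∩ Fp = M ∩ Q1 := by
    ext x
    simp only [Set.mem_inter_iff, hGp, hFp, hQ1, Set.mem_setOf_eq]
    tauto
  have idM5 : (M ∩ Gp) ∩ Fm = M ∩ Q2 := by
    ext x
    simp only [Set.mem_inter_iff, hGp, hFm, hQ2, Set.mem_setOf_eq]
    tauto
  have idM6 : (M ∩ Gm) ∩ Fp = M ∩ Q4 := by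
    ext x
    simp only [Set.mem_inter_iff, hGm, hFp, hQ4, Set.mem_setOf_eq]
    tauto
  have idM7 : (M ∩ Gm) ∩ Fm = M ∩ Q3 := by
    ext x
    simp only [Set.mem_inter_iff, hGm, hFm, hQ3, Set.mem_setOf_eq]
    tauto
  have idM8 : ((M ∩ Gp) ∩ Fp) ∩ ((M ∩ Gp) ∩ Fm) = M ∩ {x | x i0 = 0 ∧ 0 ≤ x i1} := by
    ext x
    simp only [Set.mem_inter_iff, hGp, hFp, hFm, Set.mem_setOf_eq]
    constructor
    · rintro ⟨⟨⟨h, h1⟩, h2⟩, ⟨_, h3⟩⟩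
      exact ⟨h, le_antisymm h3 h2, h1⟩
    · rintro ⟨h, h1, h2⟩
      exact ⟨⟨⟨h, h2⟩, h1.ge⟩, ⟨⟨h, h2⟩, h1.le⟩⟩
  have idM8' : ((M ∩ Gm) ∩ Fp) ∩ ((M ∩ Gm) ∩ Fm) = M ∩ {x | x i0 = 0 ∧ x i1 ≤ 0} := by
    ext x
    simp only [Set.mem_inter_iff, hGm, hFp, hFm, Set.mem_setOf_eq]
    constructor
    · rintro ⟨⟨⟨h, h1⟩, h2⟩, ⟨_, h3⟩⟩
      exact ⟨h, le_antisymm h3 h2, h1⟩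
    · rintro ⟨h, h1, h2⟩
      exact ⟨⟨⟨h, h2⟩, h1.ge⟩, ⟨⟨h, h2⟩, h1.le⟩⟩
  -- N-side identities
  have idN1 : (Nst ∩ Gp) ∪ (Nst ∩ Gm) = Nst := by
    ext x
    simp only [Set.mem_union, Set.mem_inter_iff, hGp, hGm, Set.mem_setOf_eq]
    constructor
    · rintro (⟨h, _⟩ | ⟨h, _⟩) <;> exact h
    · intro h
      rcases le_total 0 (x i1) with h1 | h1
      · exact Or.inl ⟨h, h1⟩
      · exact Or.inr ⟨h, h1⟩
  have idN2 : (Nst ∩ Gp) ∩ (Nst ∩ Gm) = M ∩ {x | x i1 = 0} := by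
    ext x
    simp only [Set.mem_inter_iff, hGp, hGm, Set.mem_setOf_eq]
    constructor
    · rintro ⟨⟨hn, h1⟩, ⟨_, h2⟩⟩
      have h0 : x i1 = 0 := le_antisymm h2 h1
      refine ⟨?_, h0⟩
      rcases (memNst x).1 hn with ⟨h, _⟩ | ⟨h, _⟩ | ⟨h, _⟩ | ⟨h, _⟩
      · exact h
      · have := hs1 (-x) h (by simp [h0])
        simpa using this
      · exact h
      · have := hs1 (-x) h (by simp [h0])
        simpa using this
    · rintro ⟨h, h0⟩
      have hx : x ∈ Nst := by
        rw [memNst]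
        rcases le_total 0 (x i0) with h1 | h1
        · exact Or.inl ⟨h, h1, h0.ge⟩
        · exact Or.inr (Or.inr (Or.inl ⟨h, h1, h0.le⟩))
      exact ⟨⟨hx, h0.ge⟩, ⟨hx, h0.le⟩⟩
  have idN3 : (Nst ∩ Gp) ∩ Fp = M ∩ Q1 := by
    ext x
    simp only [Set.mem_inter_iff, hGp, hFp, Set.mem_setOf_eq]
    constructor
    · rintro ⟨⟨hn, h1⟩, h0⟩
      refine ⟨?_, h0, h1⟩
      rcases (memNst x).1 hn with ⟨h, _⟩ | ⟨h, hq⟩ | ⟨h, hq⟩ | ⟨h, hq⟩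
      · exact h
      · have h00 : x i0 = 0 := le_antisymm hq.1 h0
        have := hs0 (-x) h (by simp [h00])
        simpa using this
      · exact h
      · have h10 : x i1 = 0 := le_antisymm hq.2 h1
        have := hs1 (-x) h (by simp [h10])
        simpa using this
    · rintro ⟨h, h0, h1⟩
      exact ⟨⟨(memNst x).2 (Or.inl ⟨h, h0, h1⟩), h1⟩, h0⟩
  have idN4 : (Nst ∩ Gp) ∩ Fm = (-M) ∩ Q2 := by
    ext x
    simp only [Set.mem_inter_iff, Set.mem_neg, hGp, hFm, hQ2, Set.mem_setOf_eq]
    constructor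
    · rintro ⟨⟨hn, h1⟩, h0⟩
      refine ⟨?_, h0, h1⟩
      rcases (memNst x).1 hn with ⟨h, hq⟩ | ⟨h, _⟩ | ⟨h, hq⟩ | ⟨h, hq⟩
      · have h00 : x i0 = 0 := le_antisymm h0 hq.1
        exact hs0 x h h00
      · exact h
      · have h10 : x i1 = 0 := le_antisymm hq.2 h1
        exact hs1 x h h10
      · have h00 : x i0 = 0 := le_antisymm h0 hq.1
        exact h
    · rintro ⟨h, h0, h1⟩
      exact ⟨⟨(memNst x).2 (Or.inr (Or.inl ⟨h, h0, h1⟩)), h1⟩, h0⟩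
  have idN5 : ((Nst ∩ Gp) ∩ Fp) ∩ ((Nst ∩ Gp) ∩ Fm) = M ∩ {x | x i0 = 0 ∧ 0 ≤ x i1} := by
    rw [idN3, idN4]
    ext x
    simp only [Set.mem_inter_iff, Set.mem_neg, hQ1, hQ2, Set.mem_setOf_eq]
    constructor
    · rintro ⟨⟨h, h1, h2⟩, _, h3, _⟩
      exact ⟨h, le_antisymm h3 h1, h2⟩
    · rintro ⟨h, h1, h2⟩
      refine ⟨⟨h, h1.ge, h2⟩, ?_, h1.le, h2⟩
      exact hs0 x h h1
  have idN6 : (Nst ∩ Gm) ∩ Fp = (-M) ∩ Q4 := by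
    ext x
    simp only [Set.mem_inter_iff, Set.mem_neg, hGm, hFp, hQ4, Set.mem_setOf_eq]
    constructor
    · rintro ⟨⟨hn, h1⟩, h0⟩
      refine ⟨?_, h0, h1⟩
      rcases (memNst x).1 hn with ⟨h, hq⟩ | ⟨h, hq⟩ | ⟨h, hq⟩ | ⟨h, _⟩
      · have h10 : x i1 = 0 := le_antisymm h1 hq.2
        exact hs1 x h h10
      · have h10 : x i1 = 0 := le_antisymm h1 hq.2
        have h00 : x i0 = 0 := le_antisymm hq.1 h0
        exact h
      · have h00 : x i0 = 0 := le_antisymm hq.1 h0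
        exact hs0 x h h00
      · exact h
    · rintro ⟨h, h0, h1⟩
      exact ⟨⟨(memNst x).2 (Or.inr (Or.inr (Or.inr ⟨h, h0, h1⟩))), h1⟩, h0⟩
  have idN7 : (Nst ∩ Gm) ∩ Fm = M ∩ Q3 := by
    ext x
    simp only [Set.mem_inter_iff, hGm, hFm, hQ3, Set.mem_setOf_eq]
    constructor
    · rintro ⟨⟨hn, h1⟩, h0⟩
      refine ⟨?_, h0, h1⟩
      rcases (memNst x).1 hn with ⟨h, hq⟩ | ⟨h, hq⟩ | ⟨h, _⟩ | ⟨h, hq⟩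
      · have h10 : x i1 = 0 := le_antisymm h1 hq.2
        have h00 : x i0 = 0 := le_antisymm h0 hq.1
        exact h
      · have h10 : x i1 = 0 := le_antisymm h1 hq.2
        have := hs1 (-x) h (by simp [h10])
        simpa using this
      · exact h
      · have h00 : x i0 = 0 := le_antisymm h0 hq.1
        have := hs0 (-x) h (by simp [h00])
        simpa using this
    · rintro ⟨h, h0, h1⟩
      exact ⟨⟨(memNst x).2 (Or.inr (Or.inr (Or.inl ⟨h, h0, h1⟩))), h1⟩, h0⟩
  have idN8 : ((Nst ∩ Gm) ∩ Fp) ∩ ((Nst ∩ Gm) ∩ Fm) = M ∩ {x | x i0 = 0 ∧ x i1 ≤ 0} := by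
    rw [idN6, idN7]
    ext x
    simp only [Set.mem_inter_iff, Set.mem_neg, hQ3, hQ4, Set.mem_setOf_eq]
    constructor
    · rintro ⟨⟨_, h1, h2⟩, h, h3, _⟩
      exact ⟨h, le_antisymm h3 h1, h2⟩
    · rintro ⟨h, h1, h2⟩
      refine ⟨⟨?_, h1.ge, h2⟩, h, h1.le, h2⟩
      exact hs0 x h h1
  have idN3' : ((Nst ∩ Gp) ∩ Fp) ∪ ((Nst ∩ Gp) ∩ Fm) = Nst ∩ Gp := by
    ext x
    simp only [Set.mem_union, Set.mem_inter_iff, hFp, hFm, Set.mem_setOf_eq]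
    constructor
    · rintro (⟨h, _⟩ | ⟨h, _⟩) <;> exact h
    · intro h
      rcases le_total 0 (x i0) with h1 | h1
      · exact Or.inl ⟨h, h1⟩
      · exact Or.inr ⟨h, h1⟩
  have idN6' : ((Nst ∩ Gm) ∩ Fp) ∪ ((Nst ∩ Gm) ∩ Fm) = Nst ∩ Gm := by
    ext x
    simp only [Set.mem_union, Set.mem_inter_iff, hFp, hFm, Set.mem_setOf_eq]
    constructor
    · rintro (⟨h, _⟩ | ⟨h, _⟩) <;> exact h
    · intro h
      rcases le_total 0 (x i0) with h1 | h1
      · exact Or.inl ⟨h, h1⟩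
      · exact Or.inr ⟨h, h1⟩
  -- negation identities
  have hnegQ2 : -(M ∩ Q4) = (-M) ∩ Q2 := by
    ext x
    simp only [Set.mem_neg, Set.mem_inter_iff, hQ2, hQ4, Set.mem_setOf_eq]
    constructor
    · rintro ⟨h, h0, h1⟩
      refine ⟨h, ?_, ?_⟩ <;> simp only [PiLp.neg_apply] at h0 h1 <;> linarith
    · rintro ⟨h, h0, h1⟩
      refine ⟨h, ?_, ?_⟩ <;> simp only [PiLp.neg_apply] <;> linarith
  have hnegQ4 : -(M ∩ Q2) = (-M) ∩ Q4 := by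
    ext x
    simp only [Set.mem_neg, Set.mem_inter_iff, hQ2, hQ4, Set.mem_setOf_eq]
    constructor
    · rintro ⟨h, h0, h1⟩
      refine ⟨h, ?_, ?_⟩ <;> simp only [PiLp.neg_apply] at h0 h1 <;> linarith
    · rintro ⟨h, h0, h1⟩
      refine ⟨h, ?_, ?_⟩ <;> simp only [PiLp.neg_apply] <;> linarith
  have volQ2s : volume (((-M) ∩ Q2) + C) = volume ((M ∩ Q4) + C) := by
    rw [← hnegQ2]
    conv_lhs => rw [← hCs]
    rw [← set_neg_add']
    exact Measure.measure_neg volume _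
  have volQ4s : volume (((-M) ∩ Q4) + C) = volume ((M ∩ Q2) + C) := by
    rw [← hnegQ4]
    conv_lhs => rw [← hCs]
    rw [← set_neg_add']
    exact Measure.measure_neg volume _
  -- assemble
  have hXMc : IsCompact (M ∩ Gp) := hMc.inter_right (hclge i1)
  have hYMc : IsCompact (M ∩ Gm) := hMc.inter_right (hclle i1)
  have hXNc : IsCompact (Nst ∩ Gp) := hNc.inter_right (hclge i1)
  have hYNc : IsCompact (Nst ∩ Gm) := hNc.inter_right (hclle i1)
  have eM1 := key (M ∩ Gp) (M ∩ Gm) hXMc hYMc (by rw [idM1]; exact hM)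
  rw [idM1, idM2] at eM1
  have eM2 := key ((M ∩ Gp) ∩ Fp) ((M ∩ Gp) ∩ Fm) (hXMc.inter_right (hclge i0))
    (hXMc.inter_right (hclle i0)) (by rw [idM3]; exact hM.inter (hcvge i1))
  rw [idM3, idM8, idM4, idM5] at eM2
  have eM3 := key ((M ∩ Gm) ∩ Fp) ((M ∩ Gm) ∩ Fm) (hYMc.inter_right (hclge i0))
    (hYMc.inter_right (hclle i0)) (by rw [idM3']; exact hM.inter (hcvle i1))
  rw [idM3', idM8', idM6, idM7] at eM3
  have eN1 := key (Nst ∩ Gp) (Nst ∩ Gm) hXNc hYNc (by rw [idN1]; exact hN)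
  rw [idN1, idN2] at eN1
  have eN2 := key ((Nst ∩ Gp) ∩ Fp) ((Nst ∩ Gp) ∩ Fm) (hXNc.inter_right (hclge i0))
    (hXNc.inter_right (hclle i0)) (by rw [idN3']; exact hN.inter (hcvge i1))
  rw [idN3', idN5, idN3, idN4] at eN2
  rw [volQ2s] at eN2
  have eN3 := key ((Nst ∩ Gm) ∩ Fp) ((Nst ∩ Gm) ∩ Fm) (hYNc.inter_right (hclge i0))
    (hYNc.inter_right (hclle i0)) (by rw [idN6']; exact hN.inter (hcvle i1))
  rw [idN6', idN8, idN6, idN7] at eN3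
  rw [volQ4s] at eN3
  -- finiteness
  have hfin : ∀ S : Set (EuclideanSpace ℝ (Fin N)), IsCompact S → volume (S + C) ≠ ⊤ :=
    fun S hS => (hS.add hCc).measure_lt_top.ne
  have hSL1c : IsCompact (M ∩ {x | x i1 = 0}) :=
    hMc.inter_right (isClosed_eq (hcont i1) continuous_const)
  have hEpc : IsCompact (M ∩ {x | x i0 = 0 ∧ 0 ≤ x i1}) :=
    hMc.inter_right ((isClosed_eq (hcont i0) continuous_const).inter (hclge i1))
  have hEmc : IsCompact (M ∩ {x | x i0 = 0 ∧ x i1 ≤ 0}) :=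
    hMc.inter_right ((isClosed_eq (hcont i0) continuous_const).inter (hclle i1))
  set a := volume ((M ∩ {x | x i1 = 0}) + C) with ha
  set b := volume ((M ∩ {x | x i0 = 0 ∧ 0 ≤ x i1}) + C) with hb
  set c := volume ((M ∩ {x | x i0 = 0 ∧ x i1 ≤ 0}) + C) with hc2
  have hane : a ≠ ⊤ := hfin _ hSL1c
  have hbne : b ≠ ⊤ := hfin _ hEpc
  have hcne : c ≠ ⊤ := hfin _ hEmc
  have EM : volume (M + C) + (a + b + c) =
      volume ((M ∩ Q1) + C) + volume ((M ∩ Q2) + C) + volume ((M ∩ Q3) + C)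
        + volume ((M ∩ Q4) + C) := by
    calc volume (M + C) + (a + b + c) = ((volume (M + C) + a) + b) + c := by ring
    _ = ((volume ((M ∩ Gp) + C) + volume ((M ∩ Gm) + C)) + b) + c := by rw [eM1]
    _ = (volume ((M ∩ Gp) + C) + b) + (volume ((M ∩ Gm) + C) + c) := by ring
    _ = (volume ((M ∩ Q1) + C) + volume ((M ∩ Q2) + C))
        + (volume ((M ∩ Q4) + C) + volume ((M ∩ Q3) + C)) := by rw [eM2, eM3]
    _ = _ := by ring
  have EN : volume (Nst + C) + (a + b + c) =
      volume ((M ∩ Q1) + C) + volume ((M ∩ Q2) + C) + volume ((M ∩ Q3) + C)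
        + volume ((M ∩ Q4) + C) := by
    calc volume (Nst + C) + (a + b + c) = ((volume (Nst + C) + a) + b) + c := by ring
    _ = ((volume ((Nst ∩ Gp) + C) + volume ((Nst ∩ Gm) + C)) + b) + c := by rw [eN1]
    _ = (volume ((Nst ∩ Gp) + C) + b) + (volume ((Nst ∩ Gm) + C) + c) := by ring
    _ = (volume ((M ∩ Q1) + C) + volume ((M ∩ Q4) + C))
        + (volume ((M ∩ Q2) + C) + volume ((M ∩ Q3) + C)) := by rw [eN2, eN3]
    _ = _ := by ring
  have habc : (a + b + c) ≠ ⊤ := by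
    simp [ENNReal.add_eq_top, hane, hbne, hcne]
  have := EM.trans EN.symm
  exact (ENNReal.add_left_inj habc).mp this
end

theorem kball_pos (j : ℕ) : 0 < kball j := by
  rw [kball]
  refine ENNReal.toReal_pos ?_ ?_
  · exact (Metric.measure_closedBall_pos volume (0 : EuclideanSpace ℝ (Fin j)) one_pos).ne'
  · exact (isCompact_closedBall (0 : EuclideanSpace ℝ (Fin j)) 1).measure_lt_top.ne

theorem vfun_eq_of_vol_eq {n : ℕ} (Vfun : ℕ → Set (EuclideanSpace ℝ (Fin n)) → ℝ)
    (hV : IsIntrinsicVolumes Vfun) {A A' : Set (EuclideanSpace ℝ (Fin n))}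
    (hA : IsCompact A) (hAc : Convex ℝ A) (hAne : A.Nonempty)
    (hA' : IsCompact A') (hA'c : Convex ℝ A') (hA'ne : A'.Nonempty)
    (hvol : ∀ ε : ℝ, 0 ≤ ε →
      volume (A + ε • Metric.closedBall (0 : EuclideanSpace ℝ (Fin n)) 1) =
        volume (A' + ε • Metric.closedBall (0 : EuclideanSpace ℝ (Fin n)) 1))
    (i : ℕ) (hi : i ≤ n) : Vfun i A = Vfun i A' := by
  set p : Polynomial ℝ := ∑ j ∈ Finset.range (n + 1),
    Polynomial.C (kball (n - j) * Vfun j A) * Polynomial.X ^ (n - j) with hp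
  set q : Polynomial ℝ := ∑ j ∈ Finset.range (n + 1),
    Polynomial.C (kball (n - j) * Vfun j A') * Polynomial.X ^ (n - j) with hq
  have heval : ∀ ε : ℝ, 0 < ε → p.eval ε = q.eval ε := by
    intro ε hε
    have h1 := hV A hA hAc hAne ε hε.le
    have h2 := hV A' hA' hA'c hA'ne ε hε.le
    have h3 := hvol ε hε.le
    have hpe : p.eval ε = ∑ j ∈ Finset.range (n + 1), kball (n - j) * Vfun j A * ε ^ (n - j) := by
      simp [hp, Polynomial.eval_finset_sum]
    have hqe : q.eval ε = ∑ j ∈ Finset.range (n + 1), kball (n - j) * Vfun j A' * ε ^ (n - j) := by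
      simp [hq, Polynomial.eval_finset_sum]
    rw [hpe, hqe, ← h1, ← h2, h3]
  have hpq : p = q := by
    apply Polynomial.eq_of_infinite_eval_eq
    apply Set.Infinite.mono (s := Set.Ioi (0 : ℝ))
    · intro x hx
      exact heval x hx
    · exact Set.Ioi_infinite 0
  have hco := congrArg (fun r : Polynomial ℝ => r.coeff (n - i)) hpq
  simp only [hp, hq, Polynomial.finset_sum_coeff, Polynomial.coeff_C_mul,
    Polynomial.coeff_X_pow] at hco
  have hsum : ∀ B : Set (EuclideanSpace ℝ (Fin n)),
      (∑ j ∈ Finset.range (n + 1),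
        kball (n - j) * Vfun j B * (if n - i = n - j then (1:ℝ) else 0)) =
        kball (n - i) * Vfun i B := by
    intro B
    rw [Finset.sum_eq_single i]
    · simp
    · intro j hj hji
      have : n - i ≠ n - j := by
        simp only [Finset.mem_range] at hj
        omega
      simp [this]
    · intro h
      exact absurd (Finset.mem_range.2 (by omega)) h
  rw [hsum A, hsum A'] at hco
  exact mul_left_cancel₀ (kball_pos (n - i)).ne' hco


section Bodies
variable (m : ℕ)

def Kset : Set (EuclideanSpace ℝ (Fin (m+2))) :=
  {x | 3 * x 0 + 4 * x 1 ≤ 12 ∧ -x 0 + 4 * x 1 ≤ 12 ∧ -x 0 ≤ 4 ∧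
       x 0 - 4 * x 1 ≤ 12 ∧ 3 * x 0 - 4 * x 1 ≤ 12 ∧ ∀ i, i ≠ 0 → i ≠ 1 → |x i| ≤ 1}

def Lset : Set (EuclideanSpace ℝ (Fin (m+2))) :=
  {x | 3 * x 0 + 4 * x 1 ≤ 12 ∧ -3 * x 0 + 4 * x 1 ≤ 12 ∧ -x 0 ≤ 4 ∧
       x 0 - 4 * x 1 ≤ 12 ∧ x 0 ≤ 4 ∧ ∀ i, i ≠ 0 → i ≠ 1 → |x i| ≤ 1}

theorem h01 : (0 : Fin (m+2)) ≠ 1 := by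
  simp [Fin.ext_iff]

theorem sum_split (f : Fin (m+2) → ℝ) :
    ∑ i, f i = f 0 + f 1 + ∑ i ∈ Finset.univ \ ({0, 1} : Finset (Fin (m+2))), f i := by
  rw [← Finset.sum_sdiff (Finset.subset_univ ({0,1} : Finset (Fin (m+2)))),
    Finset.sum_pair (h01 m)]
  ring

theorem card_rest : (Finset.univ \ ({0, 1} : Finset (Fin (m+2)))).card = m := by
  rw [Finset.card_sdiff_of_subset (Finset.subset_univ _), Finset.card_univ, Fintype.card_fin,
    Finset.card_pair (h01 m)]
  omega

theorem mem_rest {i : Fin (m+2)} :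
    i ∈ Finset.univ \ ({0, 1} : Finset (Fin (m+2))) ↔ i ≠ 0 ∧ i ≠ 1 := by
  simp [Finset.mem_sdiff]

theorem Kset_convex : Convex ℝ (Kset m) := by
  intro x hx y hy a b ha hb hab
  obtain ⟨h1, h2, h3, h4, h5, h6⟩ := hx
  obtain ⟨g1, g2, g3, g4, g5, g6⟩ := hy
  have hco : ∀ i : Fin (m+2), (a • x + b • y) i = a * x i + b * y i := by
    intro i; simp
  refine ⟨?_, ?_, ?_, ?_, ?_, ?_⟩
  · rw [hco 0, hco 1]; nlinarith
  · rw [hco 0, hco 1]; nlinarith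
  · rw [hco 0]; nlinarith
  · rw [hco 0, hco 1]; nlinarith
  · rw [hco 0, hco 1]; nlinarith
  · intro i hi0 hi1
    rw [hco i]
    have b1 := h6 i hi0 hi1
    have b2 := g6 i hi0 hi1
    calc |a * x i + b * y i| ≤ |a * x i| + |b * y i| := abs_add_le _ _
    _ = a * |x i| + b * |y i| := by rw [abs_mul, abs_mul, abs_of_nonneg ha, abs_of_nonneg hb]
    _ ≤ a * 1 + b * 1 := by
        exact add_le_add (mul_le_mul_of_nonneg_left b1 ha) (mul_le_mul_of_nonneg_left b2 hb)
    _ = 1 := by rw [mul_one, mul_one, hab]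

theorem Lset_convex : Convex ℝ (Lset m) := by
  intro x hx y hy a b ha hb hab
  obtain ⟨h1, h2, h3, h4, h5, h6⟩ := hx
  obtain ⟨g1, g2, g3, g4, g5, g6⟩ := hy
  have hco : ∀ i : Fin (m+2), (a • x + b • y) i = a * x i + b * y i := by
    intro i; simp
  refine ⟨?_, ?_, ?_, ?_, ?_, ?_⟩
  · rw [hco 0, hco 1]; nlinarith
  · rw [hco 0, hco 1]; nlinarith
  · rw [hco 0]; nlinarith
  · rw [hco 0, hco 1]; nlinarith
  · rw [hco 0]; nlinarith
  · intro i hi0 hi1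
    rw [hco i]
    have b1 := h6 i hi0 hi1
    have b2 := g6 i hi0 hi1
    calc |a * x i + b * y i| ≤ |a * x i| + |b * y i| := abs_add_le _ _
    _ = a * |x i| + b * |y i| := by rw [abs_mul, abs_mul, abs_of_nonneg ha, abs_of_nonneg hb]
    _ ≤ a * 1 + b * 1 := by
        exact add_le_add (mul_le_mul_of_nonneg_left b1 ha) (mul_le_mul_of_nonneg_left b2 hb)
    _ = 1 := by rw [mul_one, mul_one, hab]

theorem coord_continuous (i : Fin (m+2)) :
    Continuous (fun x : EuclideanSpace ℝ (Fin (m+2)) => x i) :=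
  (EuclideanSpace.proj (𝕜 := ℝ) i).continuous

theorem Kset_closed : IsClosed (Kset m) := by
  have : Kset m = {x : EuclideanSpace ℝ (Fin (m+2)) | 3 * x 0 + 4 * x 1 ≤ 12}
      ∩ ({x | -x 0 + 4 * x 1 ≤ 12} ∩ ({x | -x 0 ≤ 4} ∩ ({x | x 0 - 4 * x 1 ≤ 12}
      ∩ ({x | 3 * x 0 - 4 * x 1 ≤ 12} ∩ (⋂ i, {x | i ≠ 0 → i ≠ 1 → |x i| ≤ 1}))))) := by
    ext x
    simp only [Kset, Set.mem_setOf_eq, Set.mem_inter_iff, Set.mem_iInter]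
    try tauto
  rw [this]
  have c0 := coord_continuous m 0
  have c1 := coord_continuous m 1
  refine IsClosed.inter ?_ (IsClosed.inter ?_ (IsClosed.inter ?_ (IsClosed.inter ?_
    (IsClosed.inter ?_ ?_))))
  · exact isClosed_le (by fun_prop) continuous_const
  · exact isClosed_le (by fun_prop) continuous_const
  · exact isClosed_le (by fun_prop) continuous_const
  · exact isClosed_le (by fun_prop) continuous_const
  · exact isClosed_le (by fun_prop) continuous_const
  · refine isClosed_iInter fun i => ?_
    by_cases hi0 : i = 0
    · simp [hi0]
    · by_cases hi1 : i = 1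
      · simp [hi1]
      · have : {x : EuclideanSpace ℝ (Fin (m+2)) | i ≠ 0 → i ≠ 1 → |x i| ≤ 1}
            = {x | |x i| ≤ 1} := by
          ext x; simp [hi0, hi1]
        rw [this]
        exact isClosed_le (continuous_abs.comp (coord_continuous m i)) continuous_const

theorem Lset_closed : IsClosed (Lset m) := by
  have : Lset m = {x : EuclideanSpace ℝ (Fin (m+2)) | 3 * x 0 + 4 * x 1 ≤ 12}
      ∩ ({x | -3 * x 0 + 4 * x 1 ≤ 12} ∩ ({x | -x 0 ≤ 4} ∩ ({x | x 0 - 4 * x 1 ≤ 12}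
      ∩ ({x | x 0 ≤ 4} ∩ (⋂ i, {x | i ≠ 0 → i ≠ 1 → |x i| ≤ 1}))))) := by
    ext x
    simp only [Lset, Set.mem_setOf_eq, Set.mem_inter_iff, Set.mem_iInter]
    try tauto
  rw [this]
  refine IsClosed.inter ?_ (IsClosed.inter ?_ (IsClosed.inter ?_ (IsClosed.inter ?_
    (IsClosed.inter ?_ ?_))))
  · exact isClosed_le (by fun_prop) continuous_const
  · exact isClosed_le (by fun_prop) continuous_const
  · exact isClosed_le (by fun_prop) continuous_const
  · exact isClosed_le (by fun_prop) continuous_const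
  · exact isClosed_le (by fun_prop) continuous_const
  · refine isClosed_iInter fun i => ?_
    by_cases hi0 : i = 0
    · simp [hi0]
    · by_cases hi1 : i = 1
      · simp [hi1]
      · have : {x : EuclideanSpace ℝ (Fin (m+2)) | i ≠ 0 → i ≠ 1 → |x i| ≤ 1}
            = {x | |x i| ≤ 1} := by
          ext x; simp [hi0, hi1]
        rw [this]
        exact isClosed_le (continuous_abs.comp (coord_continuous m i)) continuous_const
end Bodies

section Bodies2
variable (m : ℕ)

theorem abs_coord_le_norm (x : EuclideanSpace ℝ (Fin (m+2))) (i : Fin (m+2)) :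
    |x i| ≤ ‖x‖ := by
  rw [EuclideanSpace.norm_eq, ← Real.sqrt_sq_eq_abs]
  apply Real.sqrt_le_sqrt
  have : x i ^ 2 = ‖x i‖ ^ 2 := by rw [Real.norm_eq_abs, sq_abs]
  rw [this]
  exact Finset.single_le_sum (fun j _ => sq_nonneg ‖x j‖) (Finset.mem_univ i)

theorem Kset_compact : IsCompact (Kset m) := by
  apply Metric.isCompact_of_isClosed_isBounded (Kset_closed m)
  apply (Metric.isBounded_closedBall (x := (0 : EuclideanSpace ℝ (Fin (m+2))))
    (r := Real.sqrt (52 + m))).subset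
  intro x hx
  obtain ⟨h1, h2, h3, h4, h5, h6⟩ := hx
  rw [Metric.mem_closedBall, dist_zero_right, EuclideanSpace.norm_eq]
  apply Real.sqrt_le_sqrt
  have hre : ∀ i : Fin (m+2), ‖x i‖ ^ 2 = (x i) ^ 2 := fun i => by
    rw [Real.norm_eq_abs, sq_abs]
  rw [Finset.sum_congr rfl fun i _ => hre i, sum_split m (fun i => (x i) ^ 2)]
  have hb0 : (x 0) ^ 2 ≤ 16 := by nlinarith
  have hb1 : (x 1) ^ 2 ≤ 36 := by nlinarith
  have hrest : ∑ i ∈ Finset.univ \ ({0, 1} : Finset (Fin (m+2))), (x i) ^ 2 ≤ m := by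
    have := Finset.sum_le_card_nsmul (Finset.univ \ ({0, 1} : Finset (Fin (m+2))))
      (fun i => (x i) ^ 2) 1 (fun i hi => by
        obtain ⟨hi0, hi1⟩ := (mem_rest m).1 hi
        have := h6 i hi0 hi1
        show (x i) ^ 2 ≤ 1
        nlinarith [abs_nonneg (x i), le_abs_self (x i), neg_abs_le (x i)])
    rw [card_rest m] at this
    simpa using this
  linarith

theorem Lset_compact : IsCompact (Lset m) := by
  apply Metric.isCompact_of_isClosed_isBounded (Lset_closed m)
  apply (Metric.isBounded_closedBall (x := (0 : EuclideanSpace ℝ (Fin (m+2))))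
    (r := Real.sqrt (52 + m))).subset
  intro x hx
  obtain ⟨h1, h2, h3, h4, h5, h6⟩ := hx
  rw [Metric.mem_closedBall, dist_zero_right, EuclideanSpace.norm_eq]
  apply Real.sqrt_le_sqrt
  have hre : ∀ i : Fin (m+2), ‖x i‖ ^ 2 = (x i) ^ 2 := fun i => by
    rw [Real.norm_eq_abs, sq_abs]
  rw [Finset.sum_congr rfl fun i _ => hre i, sum_split m (fun i => (x i) ^ 2)]
  have hb0 : (x 0) ^ 2 ≤ 16 := by nlinarith
  have hb1 : (x 1) ^ 2 ≤ 36 := by nlinarith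
  have hrest : ∑ i ∈ Finset.univ \ ({0, 1} : Finset (Fin (m+2))), (x i) ^ 2 ≤ m := by
    have := Finset.sum_le_card_nsmul (Finset.univ \ ({0, 1} : Finset (Fin (m+2))))
      (fun i => (x i) ^ 2) 1 (fun i hi => by
        obtain ⟨hi0, hi1⟩ := (mem_rest m).1 hi
        have := h6 i hi0 hi1
        show (x i) ^ 2 ≤ 1
        nlinarith [abs_nonneg (x i), le_abs_self (x i), neg_abs_le (x i)])
    rw [card_rest m] at this
    simpa using this
  linarith

theorem zero_int_K : (0 : EuclideanSpace ℝ (Fin (m+2))) ∈ interior (Kset m) := by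
  rw [mem_interior]
  refine ⟨Metric.ball 0 1, ?_, Metric.isOpen_ball, Metric.mem_ball_self one_pos⟩
  intro x hx
  rw [Metric.mem_ball, dist_zero_right] at hx
  have hb0 := abs_coord_le_norm m x 0
  have hb1 := abs_coord_le_norm m x 1
  have e0a := le_abs_self (x 0); have e0b := neg_abs_le (x 0)
  have e1a := le_abs_self (x 1); have e1b := neg_abs_le (x 1)
  refine ⟨by linarith, by linarith, by linarith, by linarith, by linarith, ?_⟩
  intro i _ _
  have := abs_coord_le_norm m x i
  linarith

theorem zero_int_L : (0 : EuclideanSpace ℝ (Fin (m+2))) ∈ interior (Lset m) := by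
  rw [mem_interior]
  refine ⟨Metric.ball 0 1, ?_, Metric.isOpen_ball, Metric.mem_ball_self one_pos⟩
  intro x hx
  rw [Metric.mem_ball, dist_zero_right] at hx
  have hb0 := abs_coord_le_norm m x 0
  have hb1 := abs_coord_le_norm m x 1
  have e0a := le_abs_self (x 0); have e0b := neg_abs_le (x 0)
  have e1a := le_abs_self (x 1); have e1b := neg_abs_le (x 1)
  refine ⟨by linarith, by linarith, by linarith, by linarith, by linarith, ?_⟩
  intro i _ _
  have := abs_coord_le_norm m x i
  linarith

theorem Kslice0 : ∀ x ∈ Kset m, x 0 = 0 → -x ∈ Kset m := by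
  rintro x ⟨h1, h2, h3, h4, h5, h6⟩ h0
  have hneg : ∀ i : Fin (m+2), (-x) i = -(x i) := fun i => by simp
  refine ⟨?_, ?_, ?_, ?_, ?_, ?_⟩
  · rw [hneg 0, hneg 1]; linarith
  · rw [hneg 0, hneg 1]; linarith
  · rw [hneg 0]; linarith
  · rw [hneg 0, hneg 1]; linarith
  · rw [hneg 0, hneg 1]; linarith
  · intro i hi0 hi1
    rw [hneg i, abs_neg]
    exact h6 i hi0 hi1

theorem Kslice1 : ∀ x ∈ Kset m, x 1 = 0 → -x ∈ Kset m := by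
  rintro x ⟨h1, h2, h3, h4, h5, h6⟩ h0
  have hneg : ∀ i : Fin (m+2), (-x) i = -(x i) := fun i => by simp
  refine ⟨?_, ?_, ?_, ?_, ?_, ?_⟩
  · rw [hneg 0, hneg 1]; linarith
  · rw [hneg 0, hneg 1]; linarith
  · rw [hneg 0]; linarith
  · rw [hneg 0, hneg 1]; linarith
  · rw [hneg 0, hneg 1]; linarith
  · intro i hi0 hi1
    rw [hneg i, abs_neg]
    exact h6 i hi0 hi1

theorem hybridK :
    (Kset m ∩ {x | 0 ≤ x 0 ∧ 0 ≤ x 1}) ∪ ((-Kset m) ∩ {x | x 0 ≤ 0 ∧ 0 ≤ x 1})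
      ∪ (Kset m ∩ {x | x 0 ≤ 0 ∧ x 1 ≤ 0}) ∪ ((-Kset m) ∩ {x | 0 ≤ x 0 ∧ x 1 ≤ 0})
      = Lset m := by
  ext x
  have hneg : ∀ i : Fin (m+2), (-x) i = -(x i) := fun i => by simp
  simp only [Set.mem_union, Set.mem_inter_iff, Set.mem_neg, Set.mem_setOf_eq, Kset, Lset,
    hneg, abs_neg]
  constructor
  · rintro (((⟨⟨h1, h2, h3, h4, h5, h6⟩, hq1, hq2⟩ | ⟨⟨h1, h2, h3, h4, h5, h6⟩, hq1, hq2⟩)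
      | ⟨⟨h1, h2, h3, h4, h5, h6⟩, hq1, hq2⟩) | ⟨⟨h1, h2, h3, h4, h5, h6⟩, hq1, hq2⟩)
    · exact ⟨by linarith, by linarith, by linarith, by linarith, by linarith, h6⟩
    · exact ⟨by linarith, by linarith, by linarith, by linarith, by linarith, h6⟩
    · exact ⟨by linarith, by linarith, by linarith, by linarith, by linarith, h6⟩
    · exact ⟨by linarith, by linarith, by linarith, by linarith, by linarith, h6⟩
  · rintro ⟨h1, h2, h3, h4, h5, h6⟩
    rcases le_total 0 (x 0) with h0 | h0 <;> rcases le_total 0 (x 1) with hy | hy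
    · exact Or.inl (Or.inl (Or.inl ⟨⟨by linarith, by linarith, by linarith, by linarith,
        by linarith, h6⟩, h0, hy⟩))
    · exact Or.inr ⟨⟨by linarith, by linarith, by linarith, by linarith, by linarith, h6⟩,
        h0, hy⟩
    · exact Or.inl (Or.inl (Or.inr ⟨⟨by linarith, by linarith, by linarith, by linarith,
        by linarith, h6⟩, h0, hy⟩))
    · exact Or.inl (Or.inr ⟨⟨by linarith, by linarith, by linarith, by linarith,
        by linarith, h6⟩, h0, hy⟩)

noncomputable def cLpt : EuclideanSpace ℝ (Fin (m+2)) :=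
  WithLp.toLp 2 (fun i : Fin (m+2) => if i = 0 then (-1/4 : ℝ) else if i = 1 then (-3/2 : ℝ) else 0)

theorem L_in_ball : ∀ x ∈ Lset m, dist x (cLpt m) ≤ Real.sqrt (325/16 + m) := by
  intro x hx
  obtain ⟨h1, h2, h3, h4, h5, h6⟩ := hx
  rw [EuclideanSpace.dist_eq]
  apply Real.sqrt_le_sqrt
  have hre : ∀ i : Fin (m+2), dist (x i) (cLpt m i) ^ 2 = (x i - cLpt m i) ^ 2 := fun i => by
    rw [Real.dist_eq, sq_abs]
  rw [Finset.sum_congr rfl fun i _ => hre i, sum_split m (fun i => (x i - cLpt m i) ^ 2)]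
  have hc0 : cLpt m 0 = -1/4 := by simp [cLpt]
  have hc1 : cLpt m 1 = -3/2 := by simp [cLpt, (h01 m).symm]
  have h2d : (x 0 - cLpt m 0) ^ 2 + (x 1 - cLpt m 1) ^ 2 ≤ 325/16 := by
    rw [hc0, hc1]
    have t1 : (0:ℝ) ≤ (12 - 3*x 0 - 4*x 1) * (4 + x 0) :=
      mul_nonneg (by linarith) (by linarith)
    have t2 : (0:ℝ) ≤ (12 - 3*x 0 - 4*x 1) * (12 - x 0 + 4*x 1) :=
      mul_nonneg (by linarith) (by linarith)
    have t3 : (0:ℝ) ≤ (12 - 3*x 0 - 4*x 1) * ((12 - 3*x 0 - 4*x 1) * (4 + x 0)) :=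
      mul_nonneg (by linarith) t1
    have t4 : (0:ℝ) ≤ (12 - 3*x 0 - 4*x 1) * ((4 + x 0) * (12 - x 0 + 4*x 1)) :=
      mul_nonneg (by linarith) (mul_nonneg (by linarith) (by linarith))
    have t5 : (0:ℝ) ≤ (12 + 3*x 0 - 4*x 1) * ((4 + x 0) * (4 - x 0)) :=
      mul_nonneg (by linarith) (mul_nonneg (by linarith) (by linarith))
    have t6 : (0:ℝ) ≤ (12 + 3*x 0 - 4*x 1) * ((12 - x 0 + 4*x 1) * (4 - x 0)) :=
      mul_nonneg (by linarith) (mul_nonneg (by linarith) (by linarith))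
    nlinarith [t1, t2, t3, t4, t5, t6]
  have hrest : ∑ i ∈ Finset.univ \ ({0, 1} : Finset (Fin (m+2))),
      (x i - cLpt m i) ^ 2 ≤ m := by
    have := Finset.sum_le_card_nsmul (Finset.univ \ ({0, 1} : Finset (Fin (m+2))))
      (fun i => (x i - cLpt m i) ^ 2) 1 (fun i hi => by
        obtain ⟨hi0, hi1⟩ := (mem_rest m).1 hi
        have hci : cLpt m i = 0 := by simp [cLpt, hi0, hi1]
        have := h6 i hi0 hi1
        show (x i - cLpt m i) ^ 2 ≤ 1
        rw [hci, sub_zero]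
        nlinarith [le_abs_self (x i), neg_abs_le (x i)])
    rw [card_rest m] at this
    simpa using this
  linarith

theorem K_far : ∀ c : EuclideanSpace ℝ (Fin (m+2)),
    ∃ x ∈ Kset m, Real.sqrt (340/16 + m) ≤ dist x c := by
  intro c
  have hone : ∀ p q : ℝ, 3*p + 4*q ≤ 12 → -p + 4*q ≤ 12 → -p ≤ 4 → p - 4*q ≤ 12 →
      3*p - 4*q ≤ 12 → 85/4 ≤ (c 0 - p)^2 + (c 1 - q)^2 →
      ∃ x ∈ Kset m, Real.sqrt (340/16 + m) ≤ dist x c := by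
    intro p q hp1 hp2 hp3 hp4 hp5 hD
    set y : EuclideanSpace ℝ (Fin (m+2)) :=
      WithLp.toLp 2 (fun i : Fin (m+2) => if i = 0 then p else if i = 1 then q else if 0 ≤ c i then -1 else 1) with hy
    have hy0 : y 0 = p := by simp [hy]
    have hy1 : y 1 = q := by simp [hy, (h01 m).symm]
    have hyi : ∀ i : Fin (m+2), i ≠ 0 → i ≠ 1 → y i = if 0 ≤ c i then -1 else 1 := by
      intro i hi0 hi1
      simp [hy, hi0, hi1]
    refine ⟨y, ⟨by rw [hy0, hy1]; exact hp1, by rw [hy0, hy1]; exact hp2,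
      by rw [hy0]; exact hp3, by rw [hy0, hy1]; exact hp4, by rw [hy0, hy1]; exact hp5,
      ?_⟩, ?_⟩
    · intro i hi0 hi1
      rw [hyi i hi0 hi1]
      split_ifs <;> norm_num
    · rw [EuclideanSpace.dist_eq]
      apply Real.sqrt_le_sqrt
      have hre : ∀ i : Fin (m+2), dist (y i) (c i) ^ 2 = (y i - c i) ^ 2 := fun i => by
        rw [Real.dist_eq, sq_abs]
      rw [Finset.sum_congr rfl fun i _ => hre i, sum_split m (fun i => (y i - c i) ^ 2)]
      have h2d : (85:ℝ)/4 ≤ (y 0 - c 0)^2 + (y 1 - c 1)^2 := by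
        rw [hy0, hy1]
        nlinarith [hD]
      have hrest : (m:ℝ) ≤ ∑ i ∈ Finset.univ \ ({0, 1} : Finset (Fin (m+2))),
          (y i - c i) ^ 2 := by
        have := Finset.card_nsmul_le_sum (Finset.univ \ ({0, 1} : Finset (Fin (m+2))))
          (fun i => (y i - c i) ^ 2) 1 (fun i hi => by
            obtain ⟨hi0, hi1⟩ := (mem_rest m).1 hi
            show (1:ℝ) ≤ (y i - c i) ^ 2
            rw [hyi i hi0 hi1]
            split_ifs with hci
            · nlinarith
            · push_neg at hci
              nlinarith)
        rw [card_rest m] at this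
        simpa using this
      linarith
  have hmax : 85/4 ≤ (c 0 - 4)^2 + (c 1 - 0)^2 ∨ 85/4 ≤ (c 0 - (-4))^2 + (c 1 - (-4))^2 ∨
      85/4 ≤ (c 0 - (-4))^2 + (c 1 - 2)^2 := by
    by_contra hcon
    push_neg at hcon
    obtain ⟨ha, hb, hc⟩ := hcon
    nlinarith [sq_nonneg (c 0 + 1/2), sq_nonneg (c 1 + 1)]
  rcases hmax with h | h | h
  · exact hone 4 0 (by norm_num) (by norm_num) (by norm_num) (by norm_num) (by norm_num) h
  · exact hone (-4) (-4) (by norm_num) (by norm_num) (by norm_num) (by norm_num)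
      (by norm_num) h
  · exact hone (-4) 2 (by norm_num) (by norm_num) (by norm_num) (by norm_num)
      (by norm_num) h

end Bodies2

theorem exists_noncongruent_equal_intrinsic_volumes_of_sections {n : ℕ} (hn : 2 ≤ n) :
    ∃ K L : Set (EuclideanSpace ℝ (Fin n)),
      IsCompact K ∧ Convex ℝ K ∧ (0 : EuclideanSpace ℝ (Fin n)) ∈ interior K ∧
      IsCompact L ∧ Convex ℝ L ∧ (0 : EuclideanSpace ℝ (Fin n)) ∈ interior L ∧
      (¬ ∃ T : EuclideanSpace ℝ (Fin n) ≃ᵢ EuclideanSpace ℝ (Fin n), T '' K = L) ∧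
      ∀ Vfun : ℕ → Set (EuclideanSpace ℝ (Fin n)) → ℝ, IsIntrinsicVolumes Vfun →
        ∀ i k : ℕ, 1 ≤ i → i ≤ k → k ≤ n - 1 →
          ∀ H : Submodule ℝ (EuclideanSpace ℝ (Fin n)), Module.finrank ℝ H = k →
            Vfun i (K ∩ (H : Set (EuclideanSpace ℝ (Fin n)))) =
              Vfun i (L ∩ (H : Set (EuclideanSpace ℝ (Fin n)))) := by
  obtain ⟨m, rfl⟩ : ∃ m, n = m + 2 := ⟨n - 2, by omega⟩
  refine ⟨Kset m, Lset m, Kset_compact m, Kset_convex m, zero_int_K m,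
    Lset_compact m, Lset_convex m, zero_int_L m, ?_, ?_⟩
  · rintro ⟨T, hT⟩
    obtain ⟨x, hxK, hfar⟩ := K_far m (T.symm (cLpt m))
    have hTx : T x ∈ Lset m := by
      rw [← hT]
      exact Set.mem_image_of_mem T hxK
    have hle := L_in_ball m (T x) hTx
    have heq : dist (T x) (cLpt m) = dist x (T.symm (cLpt m)) := by
      conv_lhs => rw [show cLpt m = T (T.symm (cLpt m)) from (T.apply_symm_apply _).symm]
      exact T.dist_eq x _
    rw [heq] at hle
    have hlt : Real.sqrt (325/16 + m) < Real.sqrt (340/16 + m) := by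
      apply Real.sqrt_lt_sqrt
      · positivity
      · have : (325:ℝ)/16 < 340/16 := by norm_num
        linarith
    linarith
  · intro Vfun hV i k hi hik hk H hfin
    set Hs := (H : Set (EuclideanSpace ℝ (Fin (m+2)))) with hHs
    have hHconv : Convex ℝ Hs := fun x hx y hy a b _ _ _ =>
      H.add_mem (H.smul_mem a hx) (H.smul_mem b hy)
    have hHclosed : IsClosed Hs := Submodule.closed_of_finiteDimensional H
    have hKH : IsCompact (Kset m ∩ Hs) := (Kset_compact m).inter_right hHclosed
    have hLH : IsCompact (Lset m ∩ Hs) := (Lset_compact m).inter_right hHclosed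
    have hKHconv : Convex ℝ (Kset m ∩ Hs) := (Kset_convex m).inter hHconv
    have hLHconv : Convex ℝ (Lset m ∩ Hs) := (Lset_convex m).inter hHconv
    have hKHne : (Kset m ∩ Hs).Nonempty := ⟨0, interior_subset (zero_int_K m), H.zero_mem⟩
    have hLHne : (Lset m ∩ Hs).Nonempty := ⟨0, interior_subset (zero_int_L m), H.zero_mem⟩
    apply vfun_eq_of_vol_eq Vfun hV hKH hKHconv hKHne hLH hLHconv hLHne ?_ i (by omega)
    intro ε hε
    set C := ε • Metric.closedBall (0 : EuclideanSpace ℝ (Fin (m+2))) 1 with hC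
    have hCconv : Convex ℝ C := (convex_closedBall _ _).smul ε
    have hCcomp : IsCompact C := by
      rw [hC, ← Set.image_smul]
      exact (isCompact_closedBall _ _).image (continuous_const_smul ε)
    have hCsym : -C = C := by
      have hB : -(Metric.closedBall (0 : EuclideanSpace ℝ (Fin (m+2))) 1)
          = Metric.closedBall 0 1 := by
        ext z
        simp [Set.mem_neg]
      rw [hC, ← Set.smul_set_neg, hB]
    have hs0 : ∀ x ∈ Kset m ∩ Hs, x 0 = 0 → -x ∈ Kset m ∩ Hs := fun x hx h0 =>
      ⟨Kslice0 m x hx.1 h0, H.neg_mem hx.2⟩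
    have hs1 : ∀ x ∈ Kset m ∩ Hs, x 1 = 0 → -x ∈ Kset m ∩ Hs := fun x hx h0 =>
      ⟨Kslice1 m x hx.1 h0, H.neg_mem hx.2⟩
    have hNL : (((Kset m ∩ Hs) ∩ {x | 0 ≤ x 0 ∧ 0 ≤ x 1})
        ∪ ((-(Kset m ∩ Hs)) ∩ {x | x 0 ≤ 0 ∧ 0 ≤ x 1})
        ∪ ((Kset m ∩ Hs) ∩ {x | x 0 ≤ 0 ∧ x 1 ≤ 0})
        ∪ ((-(Kset m ∩ Hs)) ∩ {x | 0 ≤ x 0 ∧ x 1 ≤ 0})) = Lset m ∩ Hs := by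
      have hK := hybridK m
      ext x
      simp only [Set.mem_union, Set.mem_inter_iff, Set.mem_neg, Set.mem_setOf_eq]
      constructor
      · rintro (((⟨⟨hk1, hh⟩, hq⟩ | ⟨⟨hk1, hh⟩, hq⟩) | ⟨⟨hk1, hh⟩, hq⟩) | ⟨⟨hk1, hh⟩, hq⟩)
        · refine ⟨?_, hh⟩
          rw [← hK]
          exact Or.inl (Or.inl (Or.inl ⟨hk1, hq⟩))
        · refine ⟨?_, (by simpa using H.neg_mem hh : x ∈ H)⟩
          rw [← hK]
          exact Or.inl (Or.inl (Or.inr ⟨hk1, hq⟩))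
        · refine ⟨?_, hh⟩
          rw [← hK]
          exact Or.inl (Or.inr ⟨hk1, hq⟩)
        · refine ⟨?_, (by simpa using H.neg_mem hh : x ∈ H)⟩
          rw [← hK]
          exact Or.inr ⟨hk1, hq⟩
      · rintro ⟨hL, hh⟩
        have hx : x ∈ (Kset m ∩ {x | 0 ≤ x 0 ∧ 0 ≤ x 1})
            ∪ ((-Kset m) ∩ {x | x 0 ≤ 0 ∧ 0 ≤ x 1})
            ∪ (Kset m ∩ {x | x 0 ≤ 0 ∧ x 1 ≤ 0})
            ∪ ((-Kset m) ∩ {x | 0 ≤ x 0 ∧ x 1 ≤ 0}) := by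
          rw [hK]
          exact hL
        rcases hx with ((⟨hk1, hq⟩ | ⟨hk1, hq⟩) | ⟨hk1, hq⟩) | ⟨hk1, hq⟩
        · exact Or.inl (Or.inl (Or.inl ⟨⟨hk1, hh⟩, hq⟩))
        · exact Or.inl (Or.inl (Or.inr ⟨⟨hk1, H.neg_mem hh⟩, hq⟩))
        · exact Or.inl (Or.inr ⟨⟨hk1, hh⟩, hq⟩)
        · exact Or.inr ⟨⟨hk1, H.neg_mem hh⟩, hq⟩
    have hNconv : Convex ℝ (((Kset m ∩ Hs) ∩ {x | 0 ≤ x 0 ∧ 0 ≤ x 1})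
        ∪ ((-(Kset m ∩ Hs)) ∩ {x | x 0 ≤ 0 ∧ 0 ≤ x 1})
        ∪ ((Kset m ∩ Hs) ∩ {x | x 0 ≤ 0 ∧ x 1 ≤ 0})
        ∪ ((-(Kset m ∩ Hs)) ∩ {x | 0 ≤ x 0 ∧ x 1 ≤ 0})) := by
      rw [hNL]
      exact hLHconv
    have hvol := hybrid_volume (0 : Fin (m+2)) 1 (Kset m ∩ Hs) C hKHconv hKH hs0 hs1
      hCconv hCcomp hCsym hNconv
    rw [hNL] at hvol
    exact hvol
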